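/- arXiv:2512.15237 — 7 statements merged into one kernel-verified Lean document; each statement's English description precedes it below -/
import Mathlib

section
/- Let N > 1/4 be real. Then the quartic polynomial u⁴ + 8N(1 − 6N + 8N²)u² − 32(1 − 4N)²N²u + 64(1 − 4N)²N³ has no real roots. -/
lemma aux_quartic_pos (a t : ℝ) (ha : a > 0) :
    (a + 1) * t ^ 4 + a * (a - 1) * t ^ 2 - 2 * a ^ 2 * t + a ^ 2 > 0 := by
  rcases le_or_gt 1 t with h1 | h1
  · nlinarith [sq_nonneg (a * (t - 1)), mul_nonneg (mul_nonneg ha.le (sq_nonneg t))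
      (mul_nonneg (by linarith : (0:ℝ) ≤ t - 1) (by linarith : (0:ℝ) ≤ t + 1)),
      pow_le_pow_left₀ (by norm_num : (0:ℝ) ≤ 1) h1 4]
  · rcases le_or_gt t (-3) with h3 | h3
    · nlinarith [sq_nonneg (a * (t - 1)), mul_nonneg (mul_nonneg ha.le (sq_nonneg t))
        (mul_nonneg (by linarith : (0:ℝ) ≤ 1 - t) (by linarith : (0:ℝ) ≤ -(t + 1))),
        sq_nonneg (t^2)]
    · -- -3 < t < 1
      have ht1 : (t - 1) ^ 2 > 0 := by
        nlinarith [mul_pos (by linarith : (0:ℝ) < 1 - t) (by linarith : (0:ℝ) < 1 - t)]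
      have id : 4 * (t - 1) ^ 2 * ((a + 1) * t ^ 4 + a * (a - 1) * t ^ 2 - 2 * a ^ 2 * t + a ^ 2)
          = (2 * a * (t - 1) ^ 2 + t ^ 2 * (t ^ 2 - 1)) ^ 2
            + t ^ 4 * (1 - t) ^ 3 * (t + 3) := by ring
      have hpos : (2 * a * (t - 1) ^ 2 + t ^ 2 * (t ^ 2 - 1)) ^ 2
          + t ^ 4 * (1 - t) ^ 3 * (t + 3) > 0 := by
        rcases eq_or_ne t 0 with rfl | ht0
        · nlinarith [sq_nonneg a]
        · have ht2 : 0 < t ^ 2 := lt_of_le_of_ne (sq_nonneg t) (Ne.symm (pow_ne_zero 2 ht0))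
          have ht4 : 0 < t ^ 4 := by nlinarith [pow_pos ht2 2]
          have : t ^ 4 * (1 - t) ^ 3 * (t + 3) > 0 :=
            mul_pos (mul_pos ht4 (pow_pos (by linarith) 3)) (by linarith)
          nlinarith [sq_nonneg (2 * a * (t - 1) ^ 2 + t ^ 2 * (t ^ 2 - 1))]
      nlinarith [id, hpos, ht1]

theorem stmt_7 (N : ℝ) (hN : N > 1 / 4) :
    ∀ u : ℝ, u ^ 4 + 8 * N * (1 - 6 * N + 8 * N ^ 2) * u ^ 2
      - 32 * (1 - 4 * N) ^ 2 * N ^ 2 * u + 64 * (1 - 4 * N) ^ 2 * N ^ 3 ≠ 0 := by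
  intro u h
  have hNpos : N > 0 := by linarith
  have ha : 4 * N - 1 > 0 := by linarith
  have key := aux_quartic_pos (4 * N - 1) (u / (4 * N)) ha
  have hNne : (4 : ℝ) * N ≠ 0 := by positivity
  have hid : u ^ 4 + 8 * N * (1 - 6 * N + 8 * N ^ 2) * u ^ 2
      - 32 * (1 - 4 * N) ^ 2 * N ^ 2 * u + 64 * (1 - 4 * N) ^ 2 * N ^ 3
      = 64 * N ^ 3 * ((4 * N - 1 + 1) * (u / (4 * N)) ^ 4
        + (4 * N - 1) * ((4 * N - 1) - 1) * (u / (4 * N)) ^ 2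
        - 2 * (4 * N - 1) ^ 2 * (u / (4 * N)) + (4 * N - 1) ^ 2) := by
    field_simp
    ring
  rw [h] at hid
  have h64 : (64 : ℝ) * N ^ 3 > 0 := by positivity
  nlinarith [mul_pos h64 key]
end

section
/- Let N be rational with N > 1/4 and let m be rational with m > 1 and N = m² + 1. Then the point P = (1/m², (3m² + 1)/m³) lies on the curve v² = u³ + 2(2N² + 2N − 1)u² − (4N − 1)u. -/
theorem stmt_8 (N m : ℚ) (hN : N > 1 / 4) (hm : m > 1) (hNm : N = m ^ 2 + 1) :
    ((3 * m ^ 2 + 1) / m ^ 3) ^ 2 =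
      (1 / m ^ 2) ^ 3 + 2 * (2 * N ^ 2 + 2 * N - 1) * (1 / m ^ 2) ^ 2
        - (4 * N - 1) * (1 / m ^ 2) := by
  have hm0 : m ≠ 0 := by positivity
  subst hNm
  field_simp
  ring
end

section
/- Let m be rational with m > 1 and N = m² − 1. Then the point P = (1/m², (m² − 1)/m³) lies on the curve v² = u³ + 2(2N² + 2N − 1)u² − (4N − 1)u. -/
theorem stmt_9 (N m : ℚ) (hm : m > 1) (hNm : N = m ^ 2 - 1) :
    ((m ^ 2 - 1) / m ^ 3) ^ 2 =
      (1 / m ^ 2) ^ 3 + 2 * (2 * N ^ 2 + 2 * N - 1) * (1 / m ^ 2) ^ 2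
        - (4 * N - 1) * (1 / m ^ 2) := by
  have hm0 : m ≠ 0 := by linarith
  subst hNm
  field_simp
  ring
end

section
/- Let m be a rational with m > 1, and set f = (m−1)(2m² + m + 1)², g = (m+1)(2m² − m + 1)², h = 4m(m² + 1). Then f, g, h are positive, satisfy the strict triangle inequalities, and 2fgh / ((f+g+h)(f−g−h)(g−h−f)) = m² + 1. -/
theorem stmt_10 (m : ℚ) (hm : m > 1)
    (f g h : ℚ)
    (hf : f = (m - 1) * (2 * m ^ 2 + m + 1) ^ 2)
    (hg : g = (m + 1) * (2 * m ^ 2 - m + 1) ^ 2)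
    (hh : h = 4 * m * (m ^ 2 + 1)) :
    0 < f ∧ 0 < g ∧ 0 < h ∧
    f + g > h ∧ g + h > f ∧ h + f > g ∧
    2 * f * g * h / ((f + g + h) * (f - g - h) * (g - h - f)) = m ^ 2 + 1 := by
  subst hf hg hh
  have h1 : m - 1 > 0 := by linarith
  have hfpos : (0:ℚ) < (m - 1) * (2 * m ^ 2 + m + 1) ^ 2 := by positivity
  have hgpos : (0:ℚ) < (m + 1) * (2 * m ^ 2 - m + 1) ^ 2 := by nlinarith [sq_nonneg (2 * m ^ 2 - m + 1), sq_nonneg m]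
  have hhpos : (0:ℚ) < 4 * m * (m ^ 2 + 1) := by nlinarith
  have t1 : (m - 1) * (2 * m ^ 2 + m + 1) ^ 2 + (m + 1) * (2 * m ^ 2 - m + 1) ^ 2
      - 4 * m * (m ^ 2 + 1) = 2 * m * (m ^ 2 - 1) * (4 * m ^ 2 + 3) := by ring
  have t2 : (m + 1) * (2 * m ^ 2 - m + 1) ^ 2 + 4 * m * (m ^ 2 + 1)
      - (m - 1) * (2 * m ^ 2 + m + 1) ^ 2 = 2 * (2 * m ^ 3 + 3 * m ^ 2 + 2 * m + 1) := by ring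
  have t3 : 4 * m * (m ^ 2 + 1) + (m - 1) * (2 * m ^ 2 + m + 1) ^ 2
      - (m + 1) * (2 * m ^ 2 - m + 1) ^ 2 = 2 * (m - 1) * (2 * m ^ 2 - m + 1) := by ring
  have i1 : (0:ℚ) < 2 * m * (m ^ 2 - 1) * (4 * m ^ 2 + 3) := by nlinarith
  have i2 : (0:ℚ) < 2 * (2 * m ^ 3 + 3 * m ^ 2 + 2 * m + 1) := by nlinarith
  have i3 : (0:ℚ) < 2 * (m - 1) * (2 * m ^ 2 - m + 1) := by nlinarith
  refine ⟨hfpos, hgpos, hhpos, by linarith, by linarith, by linarith, ?_⟩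
  have hd : ((m - 1) * (2 * m ^ 2 + m + 1) ^ 2 + (m + 1) * (2 * m ^ 2 - m + 1) ^ 2
      + 4 * m * (m ^ 2 + 1)) * ((m - 1) * (2 * m ^ 2 + m + 1) ^ 2
      - (m + 1) * (2 * m ^ 2 - m + 1) ^ 2 - 4 * m * (m ^ 2 + 1))
      * ((m + 1) * (2 * m ^ 2 - m + 1) ^ 2 - 4 * m * (m ^ 2 + 1)
      - (m - 1) * (2 * m ^ 2 + m + 1) ^ 2) ≠ 0 := by
    have s : (0:ℚ) < ((m - 1) * (2 * m ^ 2 + m + 1) ^ 2 + (m + 1) * (2 * m ^ 2 - m + 1) ^ 2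
        + 4 * m * (m ^ 2 + 1)) := by linarith
    have a : ((m - 1) * (2 * m ^ 2 + m + 1) ^ 2
        - (m + 1) * (2 * m ^ 2 - m + 1) ^ 2 - 4 * m * (m ^ 2 + 1)) < 0 := by linarith
    have b : ((m + 1) * (2 * m ^ 2 - m + 1) ^ 2 - 4 * m * (m ^ 2 + 1)
        - (m - 1) * (2 * m ^ 2 + m + 1) ^ 2) < 0 := by linarith
    have := mul_pos (mul_pos_of_neg_of_neg a b) s
    intro hz
    nlinarith [this]
  rw [div_eq_iff hd]
  ring
end

section
/- Let N be rational and (u, v) a point with v² = u³ + 2(2N² + 2N − 1)u² − (4N − 1)u, u ≠ 1, and u ≠ 1 − 4N. Define x = −4N(2Nu + v)/((u−1)(4N + u − 1)) and y = −4N(4N + u² − 1)(8N²u + 4Nu + 4Nv − 4N + u² − 2u + 1)/((u−1)²(4N + u − 1)²). Then y² = x⁴ + 4(2N−1)x³ + 4(4N²−2N+1)x² − 32N²x + 16N². -/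
set_option maxRecDepth 10000
set_option maxHeartbeats 1000000

theorem stmt_16 (N u v : ℚ)
    (hE : v ^ 2 = u ^ 3 + 2 * (2 * N ^ 2 + 2 * N - 1) * u ^ 2 - (4 * N - 1) * u)
    (hu1 : u ≠ 1) (hu2 : u ≠ 1 - 4 * N)
    (x y : ℚ)
    (hx : x = -(4 * N * (2 * N * u + v)) / ((u - 1) * (4 * N + u - 1)))
    (hy : y = -(4 * N * (4 * N + u ^ 2 - 1) *
        (8 * N ^ 2 * u + 4 * N * u + 4 * N * v - 4 * N + u ^ 2 - 2 * u + 1)) /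
        ((u - 1) ^ 2 * (4 * N + u - 1) ^ 2)) :
    y ^ 2 = x ^ 4 + 4 * (2 * N - 1) * x ^ 3 + 4 * (4 * N ^ 2 - 2 * N + 1) * x ^ 2
      - 32 * N ^ 2 * x + 16 * N ^ 2 := by
  have h1 : u - 1 ≠ 0 := sub_ne_zero.mpr hu1
  have h2 : 4 * N + u - 1 ≠ 0 := by intro h; apply hu2; linarith
  set d : ℚ := (u - 1) * (4 * N + u - 1) with hd
  have hdne : d ≠ 0 := mul_ne_zero h1 h2
  have hxd : x * d = -(4 * N * (2 * N * u + v)) := by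
    rw [hx, div_mul_cancel₀ _ hdne]
  have hyd : y * d ^ 2 = -(4 * N * (4 * N + u ^ 2 - 1) *
      (8 * N ^ 2 * u + 4 * N * u + 4 * N * v - 4 * N + u ^ 2 - 2 * u + 1)) := by
    rw [hy]
    rw [show (u - 1) ^ 2 * (4 * N + u - 1) ^ 2 = d ^ 2 by rw [hd]; ring]
    exact div_mul_cancel₀ _ (pow_ne_zero 2 hdne)
  refine mul_right_cancel₀ (pow_ne_zero 4 hdne) ?_
  linear_combination (y * d ^ 2 + -(4 * N * (4 * N + u ^ 2 - 1) *
      (8 * N ^ 2 * u + 4 * N * u + 4 * N * v - 4 * N + u ^ 2 - 2 * u + 1))) * hyd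
    + ((-64)*N ^ 2 + 256*N ^ 2*u + (-384)*N ^ 2*u ^ 2 + 256*N ^ 2*u ^ 3 + (-64)*N ^ 2*u ^ 4 + 640*N ^ 3 + (-256)*N ^ 3*v + (-2048)*N ^ 3*u + 512*N ^ 3*u*v + 2304*N ^ 3*u ^ 2 + (-256)*N ^ 3*u ^ 2*v + (-1024)*N ^ 3*u ^ 3 + 128*N ^ 3*u ^ 4 + (-2048)*N ^ 4 + 1536*N ^ 4*v + (-256)*N ^ 4*v ^ 2 + 4352*N ^ 4*u + (-2048)*N ^ 4*u*v + (-2560)*N ^ 4*u ^ 2 + 512*N ^ 4*u ^ 2*v + 256*N ^ 4*u ^ 3 + 2048*N ^ 5 + (-2048)*N ^ 5*v + (-3072)*N ^ 5*u ^ 2 + 1024*N ^ 5*u ^ 3 + (-4096)*N ^ 6*u + 1024*N ^ 6*u ^ 2) * hE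
    - ((x * d) ^ 3 + (x * d) ^ 2 * (-(4 * N * (2 * N * u + v))) + (x * d) * (-(4 * N * (2 * N * u + v))) ^ 2 + (-(4 * N * (2 * N * u + v))) ^ 3
      + 4 * (2 * N - 1) * d * ((x * d) ^ 2 + (x * d) * (-(4 * N * (2 * N * u + v))) + (-(4 * N * (2 * N * u + v))) ^ 2)
      + 4 * (4 * N ^ 2 - 2 * N + 1) * d ^ 2 * (x * d + (-(4 * N * (2 * N * u + v))))
      - 32 * N ^ 2 * d ^ 3) * hxd
end

section
/- Let N > 1/4 and 0 < x < 1 be reals, and suppose B := x⁴ + 4(2N−1)x³ + 4(4N²−2N+1)x² − 32N²x + 16N² is nonnegative. Set A₁ = −x² − 2(2N−1)x + 4N and A₂ = −x² + 2(2N+1)x − 4N. Then A₁ − √B > 0 and A₂ + √B > 0. -/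
theorem stmt_17 (N x : ℝ) (hN : N > 1 / 4) (hx0 : 0 < x) (hx1 : x < 1)
    (B : ℝ)
    (hB : B = x ^ 4 + 4 * (2 * N - 1) * x ^ 3 + 4 * (4 * N ^ 2 - 2 * N + 1) * x ^ 2
      - 32 * N ^ 2 * x + 16 * N ^ 2)
    (hBnn : 0 ≤ B) :
    (-x ^ 2 - 2 * (2 * N - 1) * x + 4 * N) - Real.sqrt B > 0 ∧
    (-x ^ 2 + 2 * (2 * N + 1) * x - 4 * N) + Real.sqrt B > 0 := by
  have hNpos : (0 : ℝ) < N := lt_trans (by norm_num) hN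
  have hA1 : 0 < -x ^ 2 - 2 * (2 * N - 1) * x + 4 * N := by nlinarith
  have hkey1 : B < (-x ^ 2 - 2 * (2 * N - 1) * x + 4 * N) ^ 2 := by
    nlinarith [mul_pos (mul_pos hNpos hx0) (sub_pos.2 hx1)]
  have h1 : Real.sqrt B < -x ^ 2 - 2 * (2 * N - 1) * x + 4 * N :=
    (Real.sqrt_lt' hA1).2 hkey1
  have hs := Real.sq_sqrt hBnn
  have hsnn := Real.sqrt_nonneg B
  have hkey2 : (-x ^ 2 + 2 * (2 * N + 1) * x - 4 * N) ^ 2 < B := by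
    nlinarith [mul_pos (mul_pos hNpos hx0) (pow_pos (sub_pos.2 hx1) 2)]
  constructor
  · linarith
  · nlinarith [sq_nonneg (Real.sqrt B + (-x ^ 2 + 2 * (2 * N + 1) * x - 4 * N))]
end

section
/- Let N > 1/4 and 0 < x < 1 be reals with B := x⁴ + 4(2N−1)x³ + 4(4N²−2N+1)x² − 32N²x + 16N² ≥ 0. Set A₃ = x² − 4Nx + 4N and A₄ = x² + 4Nx − 4N. Then A₃ − √B > 0 and A₄ + √B > 0. -/
theorem stmt_18 (N x : ℝ) (hN : N > 1 / 4) (hx0 : 0 < x) (hx1 : x < 1)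
    (B : ℝ)
    (hB : B = x ^ 4 + 4 * (2 * N - 1) * x ^ 3 + 4 * (4 * N ^ 2 - 2 * N + 1) * x ^ 2
      - 32 * N ^ 2 * x + 16 * N ^ 2)
    (hBnn : 0 ≤ B) :
    (x ^ 2 - 4 * N * x + 4 * N) - Real.sqrt B > 0 ∧
    (x ^ 2 + 4 * N * x - 4 * N) + Real.sqrt B > 0 := by
  have hA3 : (0:ℝ) < x ^ 2 - 4 * N * x + 4 * N := by nlinarith
  constructor
  · have h1 : Real.sqrt B < x ^ 2 - 4 * N * x + 4 * N := by
      rw [show Real.sqrt B < x ^ 2 - 4 * N * x + 4 * N ↔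
        B < (x ^ 2 - 4 * N * x + 4 * N) ^ 2 from Real.sqrt_lt' hA3]
      have id1 : (x ^ 2 - 4 * N * x + 4 * N) ^ 2 - B = 4 * x ^ 2 * (1 - x) * (4 * N - 1) := by
        rw [hB]; ring
      nlinarith [mul_pos (mul_pos (mul_pos (by norm_num : (0:ℝ) < 4) (mul_pos hx0 hx0))
        (by linarith : (0:ℝ) < 1 - x)) (by linarith : (0:ℝ) < 4 * N - 1)]
    linarith
  · have h2 : |x ^ 2 + 4 * N * x - 4 * N| < Real.sqrt B := by
      rw [← Real.sqrt_sq_eq_abs]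
      apply Real.sqrt_lt_sqrt (sq_nonneg _)
      have id2 : B - (x ^ 2 + 4 * N * x - 4 * N) ^ 2 = 4 * x ^ 2 * (1 - x) := by
        rw [hB]; ring
      nlinarith [mul_pos (mul_pos (by norm_num : (0:ℝ) < 4) (mul_pos hx0 hx0))
        (by linarith : (0:ℝ) < 1 - x)]
    have := neg_abs_le (x ^ 2 + 4 * N * x - 4 * N)
    linarith
end
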